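/- Let G = ℍ² \ {e₂} ⊂ ℝ², where ℍ² = {(x₁,x₂) ∈ ℝ² : x₂ > 0} and e₂ = (0,1). Let x = (x₁, x₂) ∈ G satisfy x₂ < |x₁|, and let r ∈ (0, r₀], where r₀ = (√(x₁² + x₂²) − √2·x₂)/(|x₁| + x₂). Then the metric ball B_s(x,r) = {y ∈ G : s_G(x,y) < r} is a convex subset of ℝ². -/
import Mathlib

open Filter Topology

/-- The triangular ratio metric `s_G(x,y) = sup_{z ∈ ∂G} |x−y|/(|z−x|+|z−y|)`. -/
noncomputable def sMetric {n : ℕ} (G : Set (EuclideanSpace ℝ (Fin n)))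
    (x y : EuclideanSpace ℝ (Fin n)) : ℝ :=
  ⨆ z ∈ frontier G, dist x y / (dist z x + dist z y)

/-- The metric ball `B_s(x,r) = {y ∈ G : s_G(x,y) < r}`. -/
def sBall {n : ℕ} (G : Set (EuclideanSpace ℝ (Fin n))) (x : EuclideanSpace ℝ (Fin n))
    (r : ℝ) : Set (EuclideanSpace ℝ (Fin n)) :=
  {y ∈ G | sMetric G x y < r}

/- ### Auxiliary real-number lemmas -/

private lemma key_aux (A b r : ℝ) (hb : 0 < b) (hbA : b < A) (hr : 0 < r)
    (hle : r ≤ (Real.sqrt (A^2 + b^2) - Real.sqrt 2 * b) / (A + b)) :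
    (A + b) * r^2 + 2 * Real.sqrt 2 * b * r ≤ A - b := by
  have hAb : 0 < A + b := by linarith
  have hS : Real.sqrt (A^2+b^2) ^ 2 = A^2 + b^2 := Real.sq_sqrt (by positivity)
  have hS0 : 0 ≤ Real.sqrt (A^2+b^2) := Real.sqrt_nonneg _
  have hw : Real.sqrt 2 ^ 2 = 2 := Real.sq_sqrt (by norm_num)
  have hw0 : 0 ≤ Real.sqrt 2 := Real.sqrt_nonneg 2
  have h1 : r * (A + b) ≤ Real.sqrt (A^2+b^2) - Real.sqrt 2 * b := by
    rw [le_div_iff₀ hAb] at hle; linarith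
  have h2 : 0 ≤ r*(A+b) + Real.sqrt 2 * b := by positivity
  have h3 : (r*(A+b) + Real.sqrt 2 * b)^2 ≤ A^2 + b^2 := by nlinarith
  nlinarith

private lemma r_lt_one (A b r : ℝ) (hb : 0 < b) (hbA : b < A) (hr : 0 < r)
    (hkey : (A + b) * r^2 + 2 * Real.sqrt 2 * b * r ≤ A - b) : r < 1 := by
  by_contra h
  push_neg at h
  have hw0 : (0:ℝ) ≤ 2 * Real.sqrt 2 * b * r := by positivity
  nlinarith [sq_nonneg (r-1)]

private lemma cone_aux (A b u v r : ℝ) (hb : 0 < b) (hr : 0 < r) (hr1 : r < 1)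
    (hkey : (A + b) * r^2 + 2 * Real.sqrt 2 * b * r ≤ A - b)
    (hball : ((1-r^2)*(u - A))^2 + ((1-r^2)*v - b*(1+r^2))^2 < (2*b*r)^2) :
    v ≤ u := by
  by_contra hvu
  push_neg at hvu
  set t := 1 - r^2 with htdef
  have ht : 0 < t := by rw [htdef]; nlinarith only [hr, hr1]
  set B := b*(1+r^2) with hB
  set P := 2*b*r with hP
  have hw : Real.sqrt 2 ^ 2 = 2 := Real.sq_sqrt (by norm_num)
  have hw0 : 0 ≤ Real.sqrt 2 := Real.sqrt_nonneg 2
  have h2 : Real.sqrt 2 * P ≤ t*A - B := by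
    rw [htdef, hB, hP]; nlinarith
  have hP0 : 0 < P := by rw [hP]; positivity
  have hAB0 : 0 ≤ t*A - B := le_trans (by positivity) h2
  have h4 : 2*P^2 ≤ (t*A - B)^2 := by
    nlinarith [mul_le_mul h2 h2 (by positivity : (0:ℝ) ≤ Real.sqrt 2 * P) hAB0]
  set p := t*v - B with hp
  set q := t*(A - u) with hq
  have h5 : t*A - B < p + q := by
    have h51 : p + q - (t*A - B) = t*(v-u) := by rw [hp, hq]; ring
    have h52 : 0 < t*(v-u) := mul_pos ht (by linarith)
    linarith
  have h6 : (t*A - B)^2 < (p+q)^2 := by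
    have := mul_pos (sub_pos.mpr h5) (show 0 < (p+q)+(t*A-B) by linarith)
    nlinarith [this]
  have h7 : (p+q)^2 ≤ 2*(p^2+q^2) := by nlinarith [sq_nonneg (p - q)]
  have h8 : p^2 + q^2 < P^2 := by
    have hqq : q^2 = (t*(u-A))^2 := by rw [hq]; ring
    rw [hqq]; linarith [hball]
  linarith

private lemma quad_iff (a b u v r t c ρ : ℝ) (htdef : t = 1 - r^2) (ht : 0 < t)
    (hc : c = b*(1+r^2)/t) (hρ : ρ = 2*b*r/t) :
    ((u-a)^2 + (v-c)^2 < ρ^2) ↔ ((a-u)^2+(b-v)^2 < r^2*((a-u)^2+(b+v)^2)) := by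
  have hident : t^2*((u-a)^2 + (v-c)^2 - ρ^2)
      = t*((a-u)^2+(b-v)^2 - r^2*((a-u)^2+(b+v)^2)) := by
    have htne : t ≠ 0 := ne_of_gt ht
    subst hc hρ
    field_simp
    rw [htdef]; ring
  constructor <;> intro h <;> nlinarith [hident, mul_pos ht ht]

private lemma v_pos (a b u v r t c ρ : ℝ) (htdef : t = 1 - r^2) (ht : 0 < t) (hb : 0 < b)
    (hr : 0 < r) (hr1 : r < 1)
    (hc : c = b*(1+r^2)/t) (hρ : ρ = 2*b*r/t)
    (h : (u-a)^2 + (v-c)^2 < ρ^2) : 0 < v := by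
  have h1 : (v-c)^2 < ρ^2 := by nlinarith [sq_nonneg (u-a)]
  have h2 : c*t = b*(1+r^2) := by rw [hc]; field_simp
  have h3 : ρ*t = 2*b*r := by rw [hρ]; field_simp
  have h4 : (c - ρ)*t = b*(1-r)^2 := by nlinarith [h2, h3]
  have h5 : 0 < c - ρ := by nlinarith [mul_pos hb (mul_pos (sub_pos.mpr hr1) (sub_pos.mpr hr1))]
  have hρ0 : 0 < ρ := by rw [hρ]; positivity
  nlinarith [h1, h5, hρ0]

/- ### Auxiliary Euclidean-plane lemmas -/

private lemma dist2 (p q : EuclideanSpace ℝ (Fin 2)) :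
    dist p q = Real.sqrt ((p 0 - q 0)^2 + (p 1 - q 1)^2) := by
  rw [EuclideanSpace.dist_eq]
  simp [Fin.sum_univ_two, Real.dist_eq, sq_abs]

private lemma hcont1 : Continuous fun w : EuclideanSpace ℝ (Fin 2) => w 1 :=
  (EuclideanSpace.proj (1 : Fin 2) : EuclideanSpace ℝ (Fin 2) →L[ℝ] ℝ).continuous

private lemma frontier_sub :
    frontier ({w : EuclideanSpace ℝ (Fin 2) | 0 < w 1} \
        ({EuclideanSpace.single 1 (1:ℝ)} : Set (EuclideanSpace ℝ (Fin 2)))) ⊆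
      {z : EuclideanSpace ℝ (Fin 2) | z 1 = 0} ∪ {EuclideanSpace.single 1 (1:ℝ)} := by
  have h1 : frontier ({w : EuclideanSpace ℝ (Fin 2) | 0 < w 1} \
        ({EuclideanSpace.single 1 (1:ℝ)} : Set (EuclideanSpace ℝ (Fin 2)))) ⊆
      frontier {w : EuclideanSpace ℝ (Fin 2) | 0 < w 1} ∪
        frontier (({EuclideanSpace.single 1 (1:ℝ)} : Set (EuclideanSpace ℝ (Fin 2)))ᶜ) := by
    rw [Set.diff_eq]
    intro z hz
    rcases frontier_inter_subset _ _ hz with h | h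
    · exact Or.inl h.1
    · exact Or.inr h.2
  intro z hz
  rcases h1 hz with h | h
  · left
    have hcl : closure {w : EuclideanSpace ℝ (Fin 2) | 0 < w 1} ⊆ {w | 0 ≤ w 1} :=
      closure_minimal (Set.setOf_subset_setOf.mpr fun w => le_of_lt)
        (isClosed_le continuous_const hcont1)
    have hcl2 : closure ({w : EuclideanSpace ℝ (Fin 2) | 0 < w 1}ᶜ) ⊆ {w | w 1 ≤ 0} := by
      apply closure_minimal _ (isClosed_le hcont1 continuous_const)
      intro w hw
      simpa using hw
    rw [frontier_eq_closure_inter_closure] at h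
    exact le_antisymm (hcl2 h.2) (hcl h.1)
  · right
    rw [frontier_compl] at h
    have := frontier_subset_closure h
    rwa [closure_singleton] at this

private lemma axis_mem_frontier (z : EuclideanSpace ℝ (Fin 2)) (hz : z 1 = 0) :
    z ∈ frontier ({w : EuclideanSpace ℝ (Fin 2) | 0 < w 1} \
        ({EuclideanSpace.single 1 (1:ℝ)} : Set (EuclideanSpace ℝ (Fin 2)))) := by
  constructor
  · have htend : Tendsto (fun n : ℕ => z + (((n:ℝ)+2)⁻¹) • EuclideanSpace.single 1 (1:ℝ))
        atTop (𝓝 z) := by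
      have h0 : Tendsto (fun n : ℕ => ((n:ℝ)+2)⁻¹) atTop (𝓝 0) :=
        tendsto_inv_atTop_zero.comp (tendsto_atTop_add_const_right _ 2 tendsto_natCast_atTop_atTop)
      have := (h0.smul_const (EuclideanSpace.single 1 (1:ℝ))).const_add z
      simpa using this
    apply mem_closure_of_tendsto htend
    filter_upwards with n
    constructor
    · show 0 < ((z + (((n:ℝ)+2)⁻¹) • EuclideanSpace.single 1 (1:ℝ) : EuclideanSpace ℝ (Fin 2))) 1
      simp [hz, EuclideanSpace.single_apply]
      positivity
    · simp only [Set.mem_singleton_iff]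
      intro hc
      have := congrArg (fun w : EuclideanSpace ℝ (Fin 2) => w 1) hc
      simp [hz, EuclideanSpace.single_apply] at this
      have h2 : ((n:ℝ)+2) ≥ 2 := by
        have : (0:ℝ) ≤ (n:ℝ) := Nat.cast_nonneg n
        linarith
      have h3 : ((n:ℝ)+2)⁻¹ ≤ 2⁻¹ := by
        apply inv_anti₀ <;> norm_num
      rw [this] at h3; norm_num at h3
  · intro hc
    have h1 := interior_subset hc
    have h2 : (0:ℝ) < z 1 := h1.1
    linarith

private lemma sMetric_le {n : ℕ} (G : Set (EuclideanSpace ℝ (Fin n)))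
    (x y : EuclideanSpace ℝ (Fin n)) (M : ℝ) (hM : 0 ≤ M)
    (h : ∀ z ∈ frontier G, dist x y / (dist z x + dist z y) ≤ M) : sMetric G x y ≤ M :=
  Real.iSup_le (fun z => Real.iSup_le (fun hz => h z hz) hM) hM

private lemma le_sMetric {n : ℕ} (G : Set (EuclideanSpace ℝ (Fin n)))
    (x y z : EuclideanSpace ℝ (Fin n)) (hz : z ∈ frontier G) :
    dist x y / (dist z x + dist z y) ≤ sMetric G x y := by
  have hb : ∀ w : EuclideanSpace ℝ (Fin n), dist x y / (dist w x + dist w y) ≤ 1 :=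
    fun w => div_le_one_of_le₀ (dist_triangle_left x y w) (by positivity)
  have hbdd : BddAbove (Set.range fun w : EuclideanSpace ℝ (Fin n) =>
      ⨆ _ : w ∈ frontier G, dist x y / (dist w x + dist w y)) := by
    refine ⟨1, ?_⟩
    rintro s ⟨w, rfl⟩
    exact Real.iSup_le (fun _ => hb w) zero_le_one
  haveI : Nonempty (z ∈ frontier G) := ⟨hz⟩
  calc dist x y / (dist z x + dist z y)
      = ⨆ _ : z ∈ frontier G, dist x y / (dist z x + dist z y) := ciSup_const.symm
    _ ≤ sMetric G x y := le_ciSup hbdd z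

set_option maxHeartbeats 2000000 in
/-- Let G = ℍ² \ {e₂} ⊂ ℝ². Let x = (x₁, x₂) ∈ G satisfy x₂ < |x₁|, and let
r ∈ (0, r₀], where r₀ = (√(x₁² + x₂²) − √2·x₂)/(|x₁| + x₂). Then the metric ball
B_s(x,r) is a convex subset of ℝ². -/
theorem sBall_punctured_halfPlane_convex (x : EuclideanSpace ℝ (Fin 2))
    (hx : x ∈ {w : EuclideanSpace ℝ (Fin 2) | 0 < w 1} \ ({EuclideanSpace.single 1 (1:ℝ)} : Set (EuclideanSpace ℝ (Fin 2))))
    (hx' : x 1 < |x 0|) (r : ℝ)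
    (hr : r ∈ Set.Ioc 0 ((Real.sqrt ((x 0)^2 + (x 1)^2) - Real.sqrt 2 * x 1) /
      (|x 0| + x 1))) :
    Convex ℝ (sBall ({w : EuclideanSpace ℝ (Fin 2) | 0 < w 1} \ ({EuclideanSpace.single 1 (1:ℝ)} : Set (EuclideanSpace ℝ (Fin 2)))) x r) := by
  obtain ⟨hxH, hxe⟩ := hx
  obtain ⟨hr0, hrle⟩ := hr
  set G : Set (EuclideanSpace ℝ (Fin 2)) :=
    {w : EuclideanSpace ℝ (Fin 2) | 0 < w 1} \
      ({EuclideanSpace.single 1 (1:ℝ)} : Set (EuclideanSpace ℝ (Fin 2))) with hGdef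
  have hb : 0 < x 1 := hxH
  have hbA : x 1 < |x 0| := hx'
  have habs : 0 < |x 0| := lt_trans hb hbA
  have hrle' : r ≤ (Real.sqrt (|x 0|^2 + (x 1)^2) - Real.sqrt 2 * x 1) / (|x 0| + x 1) := by
    rwa [sq_abs]
  have hkey := key_aux |x 0| (x 1) r hb hbA hr0 hrle'
  have hr1 : r < 1 := r_lt_one |x 0| (x 1) r hb hbA hr0 hkey
  set t := 1 - r^2 with htdef
  have ht : 0 < t := by rw [htdef]; nlinarith only [hr0, hr1]
  set c := (x 1)*(1+r^2)/t with hcdef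
  set ρ := 2*(x 1)*r/t with hρdef
  have hρ : 0 < ρ := by rw [hρdef]; positivity
  set q : EuclideanSpace ℝ (Fin 2) :=
    EuclideanSpace.single 0 (x 0) + EuclideanSpace.single 1 c with hqdef
  have hq0 : q 0 = x 0 := by simp [hqdef, EuclideanSpace.single_apply]
  have hq1 : q 1 = c := by simp [hqdef, EuclideanSpace.single_apply]
  set s : ℝ := if 0 ≤ x 0 then 1 else -1 with hsdef
  have hs2 : s^2 = 1 := by rw [hsdef]; split_ifs <;> norm_num
  have hsa : s * x 0 = |x 0| := by
    rw [hsdef]; split_ifs with h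
    · rw [one_mul, abs_of_nonneg h]
    · rw [abs_of_neg (lt_of_not_ge h)]; ring
  have hct : c*t = (x 1)*(1+r^2) := by rw [hcdef]; field_simp
  have hρt : ρ*t = 2*(x 1)*r := by rw [hρdef]; field_simp
  clear_value t c ρ s
  suffices hset : sBall G x r = Metric.ball q ρ by
    rw [hset]; exact convex_ball q ρ
  ext y
  -- reflected point
  set Y : EuclideanSpace ℝ (Fin 2) := y - (2*(y 1)) • EuclideanSpace.single 1 (1:ℝ) with hYdef
  have hY0 : Y 0 = y 0 := by simp [hYdef, EuclideanSpace.single_apply]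
  have hY1 : Y 1 = -(y 1) := by simp [hYdef, EuclideanSpace.single_apply]; ring
  have hdxy : dist x y = Real.sqrt ((x 0 - y 0)^2 + (x 1 - y 1)^2) := dist2 x y
  have hdxY : dist x Y = Real.sqrt ((x 0 - y 0)^2 + (x 1 + y 1)^2) := by
    rw [dist2, hY0, hY1]; ring_nf
  -- membership in the metric ball, in quadratic form
  have hball_iff : dist y q < ρ ↔
      (x 0 - y 0)^2 + (x 1 - y 1)^2 < r^2*((x 0 - y 0)^2 + (x 1 + y 1)^2) := by
    rw [dist2, hq0, hq1, Real.sqrt_lt' hρ]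
    exact quad_iff (x 0) (x 1) (y 0) (y 1) r t c ρ htdef ht hcdef hρdef
  -- dist inequality in quadratic form
  have hlt_iff : ∀ hy : 0 < y 1, (dist x y < r * dist x Y ↔
      (x 0 - y 0)^2 + (x 1 - y 1)^2 < r^2*((x 0 - y 0)^2 + (x 1 + y 1)^2)) := by
    intro hy
    rw [hdxy, hdxY]
    rw [show r * Real.sqrt ((x 0 - y 0)^2 + (x 1 + y 1)^2)
        = Real.sqrt (r^2 * ((x 0 - y 0)^2 + (x 1 + y 1)^2)) by
      rw [Real.sqrt_mul (sq_nonneg r), Real.sqrt_sq hr0.le]]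
    exact Real.sqrt_lt_sqrt_iff (by positivity)
  have hdxY_pos : ∀ hy : 0 < y 1, 0 < dist x Y := by
    intro hy
    rw [hdxY]
    apply Real.sqrt_pos.mpr
    nlinarith only [sq_nonneg (x 0 - y 0), hy, hb]
  constructor
  · rintro ⟨⟨hy1, hy2⟩, hsm⟩
    have hv : 0 < y 1 := hy1
    set l := x 1 / (x 1 + y 1) with hldef
    have hbv : 0 < x 1 + y 1 := by linarith
    set zs : EuclideanSpace ℝ (Fin 2) := x + l • (Y - x) with hzsdef
    have hzs1 : zs 1 = 0 := by
      have : zs 1 = x 1 + l * (Y 1 - x 1) := by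
        simp [hzsdef]
      rw [this, hY1, hldef]
      field_simp
      ring
    have hzsF : zs ∈ frontier G := axis_mem_frontier zs hzs1
    have hl0 : 0 ≤ l := by rw [hldef]; positivity
    have hl1 : l ≤ 1 := by rw [hldef, div_le_one hbv]; linarith
    have hdzy : dist zs y = dist zs Y := by
      rw [dist2, dist2, hY0, hY1, hzs1]
      ring_nf
    have h2 : x - zs = l • (x - Y) := by rw [hzsdef]; module
    have h3 : Y - zs = (1-l) • (Y - x) := by rw [hzsdef]; module
    have hdsum : dist zs x + dist zs y = dist x Y := by
      rw [hdzy, dist_comm zs x, dist_comm zs Y, dist_eq_norm, dist_eq_norm, dist_eq_norm,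
        h2, h3, norm_smul, norm_smul, Real.norm_eq_abs, Real.norm_eq_abs,
        abs_of_nonneg hl0, abs_of_nonneg (by linarith : (0:ℝ) ≤ 1 - l),
        norm_sub_rev Y x]
      ring
    have hle := le_sMetric G x y zs hzsF
    rw [hdsum] at hle
    have hfrac : dist x y / dist x Y < r := lt_of_le_of_lt hle hsm
    rw [div_lt_iff₀ (hdxY_pos hv)] at hfrac
    have hlt : dist x y < r * dist x Y := by linarith [mul_comm r (dist x Y)]
    exact hball_iff.mpr ((hlt_iff hv).mp hlt)
  · intro hyball
    have hQ1 : (x 0 - y 0)^2 + (x 1 - y 1)^2 < r^2*((x 0 - y 0)^2 + (x 1 + y 1)^2) :=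
      hball_iff.mp hyball
    have hq2 : (y 0 - x 0)^2 + (y 1 - c)^2 < ρ^2 := by
      have hyd : dist y q < ρ := hyball
      rwa [dist2, hq0, hq1, Real.sqrt_lt' hρ] at hyd
    have hv : 0 < y 1 := v_pos (x 0) (x 1) (y 0) (y 1) r t c ρ htdef ht hb hr0 hr1
      hcdef hρdef hq2
    have hball' : ((1-r^2)*(s*(y 0) - |x 0|))^2 + ((1-r^2)*(y 1) - (x 1)*(1+r^2))^2
        < (2*(x 1)*r)^2 := by
      have h1 : t^2*((y 0 - x 0)^2+(y 1 - c)^2) < t^2*ρ^2 := by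
        nlinarith only [mul_lt_mul_of_pos_left hq2 (mul_pos ht ht)]
      have h3 : ((1-r^2)*(s*(y 0) - |x 0|))^2 + ((1-r^2)*(y 1) - (x 1)*(1+r^2))^2
          = t^2*((y 0 - x 0)^2+(y 1 - c)^2) := by
        rw [← hsa, ← hct, ← htdef]
        linear_combination (t^2*(y 0 - x 0)^2) * hs2
      have h4 : (2*(x 1)*r)^2 = t^2*ρ^2 := by rw [← hρt]; ring
      rw [h3, h4]; exact h1
    have hcone : y 1 ≤ s * y 0 :=
      cone_aux |x 0| (x 1) (s*(y 0)) (y 1) r hb hr0 hr1 hkey hball'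
    have hyne : y ≠ EuclideanSpace.single 1 (1:ℝ) := by
      intro hcontra
      have h0 : y 0 = 0 := by
        rw [hcontra]; simp [EuclideanSpace.single_apply]
      have h1 : y 1 = 1 := by
        rw [hcontra]; simp [EuclideanSpace.single_apply]
      rw [h0, h1] at hcone
      simp at hcone
      linarith
    have hyG : y ∈ G := ⟨hv, by simpa using hyne⟩
    refine ⟨hyG, ?_⟩
    -- bound every frontier term
    have hzbound : ∀ z ∈ frontier G, dist x Y ≤ dist z x + dist z y := by
      intro z hz
      rcases frontier_sub hz with hz0 | hze
      · have h1 : dist z y = dist z Y := by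
          rw [dist2, dist2, hY0, hY1]
          have : z 1 = 0 := hz0
          rw [this]; ring_nf
        calc dist x Y ≤ dist x z + dist z Y := dist_triangle _ _ _
          _ = dist z x + dist z y := by rw [dist_comm x z, h1]
      · have hze' : z = EuclideanSpace.single 1 (1:ℝ) := hze
        subst hze'
        set z0 : EuclideanSpace ℝ (Fin 2) := EuclideanSpace.single 0 s with hz0def
        have hz00 : z0 0 = s := by simp [hz0def, EuclideanSpace.single_apply]
        have hz01 : z0 1 = 0 := by simp [hz0def, EuclideanSpace.single_apply]
        have he0 : (EuclideanSpace.single 1 (1:ℝ) : EuclideanSpace ℝ (Fin 2)) 0 = 0 := by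
          simp [EuclideanSpace.single_apply]
        have he1 : (EuclideanSpace.single 1 (1:ℝ) : EuclideanSpace ℝ (Fin 2)) 1 = 1 := by
          simp [EuclideanSpace.single_apply]
        have h1 : dist x z0 ≤ dist x (EuclideanSpace.single 1 (1:ℝ)) := by
          rw [dist2, dist2, hz00, hz01, he0, he1]
          apply Real.sqrt_le_sqrt
          nlinarith only [hs2, hsa, hbA]
        have h2 : dist z0 y ≤ dist (EuclideanSpace.single 1 (1:ℝ)) y := by
          rw [dist2, dist2, hz00, hz01, he0, he1]
          apply Real.sqrt_le_sqrt
          nlinarith only [hs2, hcone]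
        have h3 : dist z0 y = dist z0 Y := by
          rw [dist2, dist2, hY0, hY1, hz01]; ring_nf
        have h4 : dist x Y ≤ dist x z0 + dist z0 y := by
          rw [h3]
          exact dist_triangle _ _ _
        calc dist x Y ≤ dist x z0 + dist z0 y := h4
          _ ≤ dist x (EuclideanSpace.single 1 (1:ℝ)) + dist (EuclideanSpace.single 1 (1:ℝ)) y :=
            add_le_add h1 h2
          _ = dist (EuclideanSpace.single 1 (1:ℝ)) x + dist (EuclideanSpace.single 1 (1:ℝ)) y := by
            rw [dist_comm]
    have hMnn : 0 ≤ dist x y / dist x Y := by positivity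
    have hsle : sMetric G x y ≤ dist x y / dist x Y := by
      apply sMetric_le G x y _ hMnn
      intro z hz
      apply div_le_div_of_nonneg_left dist_nonneg (hdxY_pos hv) (hzbound z hz)
    have hlt : dist x y < r * dist x Y := (hlt_iff hv).mpr hQ1
    have hfr : dist x y / dist x Y < r := by
      rw [div_lt_iff₀ (hdxY_pos hv)]
      linarith [mul_comm r (dist x Y)]
    exact lt_of_le_of_lt hsle hfr
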